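/- Let $1\le q<p<\infty$. If $w\in A(\mathcal M^{q}(\varphi))$ then $w\in A(\mathcal M^{p}(\varphi))$; more precisely, $\frac{\|\chi_B\|_{\mathcal M^{p}(\varphi,w)}\|\chi_B\|_{\mathcal M^{p}(\varphi,w)'}}{|B|} \le \left(\frac{\|\chi_B\|_{\mathcal M^{q}(\varphi,w)}\|\chi_B\|_{\mathcal M^{q}(\varphi,w)'}}{|B|}\right)^{q/p}$ for every ball $B$. -/

import Mathlib

open MeasureTheory Metric ENNReal Set

noncomputable section

abbrev En (n : ℕ) := EuclideanSpace ℝ (Fin n)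

/-- Weighted Morrey "norm": sup over all balls of `((φ(B))⁻¹ ∫_B f^p w)^{1/p}`. -/
def morreyNorm (n : ℕ) (p : ℝ) (φ : En n → ℝ → ℝ≥0∞) (w f : En n → ℝ≥0∞) : ℝ≥0∞ :=
  ⨆ (c : En n) (r : ℝ) (_ : 0 < r),
    ((∫⁻ x in ball c r, f x ^ p * w x) / φ c r) ^ (1 / p)

/-- Köthe dual norm of the weighted Morrey space. -/
def kotheNorm (n : ℕ) (p : ℝ) (φ : En n → ℝ → ℝ≥0∞) (w g : En n → ℝ≥0∞) : ℝ≥0∞ :=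
  ⨆ (f : En n → ℝ≥0∞) (_ : morreyNorm n p φ w f ≤ 1), ∫⁻ x, f x * g x

/-- Characteristic function of the ball `B(c,r)`, with values in `ℝ≥0∞`. -/
def chiB {n : ℕ} (c : En n) (r : ℝ) : En n → ℝ≥0∞ := (ball c r).indicator 1

lemma chiB_rpow {n : ℕ} (c : En n) (r : ℝ) {s : ℝ} (hs : 0 < s) (x : En n) :
    chiB c r x ^ s = chiB c r x := by
  unfold chiB
  by_cases h : x ∈ ball c r
  · simp [Set.indicator_of_mem h]
  · simp [Set.indicator_of_notMem h, ENNReal.zero_rpow_of_pos hs]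

lemma mul_chiB {n : ℕ} (c : En n) (r : ℝ) (f : En n → ℝ≥0∞) :
    (∫⁻ x, f x * chiB c r x) = ∫⁻ x in ball c r, f x := by
  rw [← lintegral_indicator measurableSet_ball]
  refine lintegral_congr fun x => ?_
  unfold chiB
  by_cases h : x ∈ ball c r <;> simp [h]

theorem stmt1 {n : ℕ} (p q : ℝ) (hq : 1 ≤ q) (hqp : q < p)
    (φ : En n → ℝ → ℝ≥0∞) (w : En n → ℝ≥0∞) (c : En n) (r : ℝ) (hr : 0 < r) :
    morreyNorm n p φ w (chiB c r) * kotheNorm n p φ w (chiB c r) / volume (ball c r)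
      ≤ (morreyNorm n q φ w (chiB c r) * kotheNorm n q φ w (chiB c r) /
          volume (ball c r)) ^ (q / p) := by
  have hq0 : (0:ℝ) < q := lt_of_lt_of_le zero_lt_one hq
  have hp0 : (0:ℝ) < p := hq0.trans hqp
  set t : ℝ := q / p with ht
  have ht0 : 0 < t := div_pos hq0 hp0
  have ht1 : t < 1 := (div_lt_one hp0).2 hqp
  set B := ball c r with hB
  have hV0 : volume B ≠ 0 := (measure_ball_pos volume c hr).ne'
  have hVtop : volume B ≠ ∞ := measure_ball_lt_top.ne
  -- Step A
  have morreyA : morreyNorm n p φ w (chiB c r) ≤ (morreyNorm n q φ w (chiB c r)) ^ t := by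
    rw [morreyNorm]
    refine iSup_le fun c' => iSup_le fun r' => iSup_le fun hr' => ?_
    have hAint : (∫⁻ x in ball c' r', chiB c r x ^ p * w x)
        = ∫⁻ x in ball c' r', chiB c r x ^ q * w x :=
      lintegral_congr fun x => by rw [chiB_rpow c r hp0, chiB_rpow c r hq0]
    rw [hAint]
    set A := (∫⁻ x in ball c' r', chiB c r x ^ q * w x) / φ c' r' with hA
    have h1 : A ^ (1/p) = (A ^ (1/q)) ^ t := by
      rw [← ENNReal.rpow_mul]
      congr 1
      rw [ht]
      field_simp
    rw [h1]
    refine ENNReal.rpow_le_rpow ?_ ht0.le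
    rw [morreyNorm]
    exact le_iSup_of_le c' (le_iSup_of_le r' (le_iSup_of_le hr' le_rfl))
  -- Step B
  have kotheB : kotheNorm n p φ w (chiB c r)
      ≤ (kotheNorm n q φ w (chiB c r)) ^ t * volume B ^ (1 - t) := by
    rw [kotheNorm]
    refine iSup_le fun f => iSup_le fun hf => ?_
    rw [mul_chiB, ← hB]
    obtain ⟨g, hgm, hgle, hgeq⟩ := exists_measurable_le_lintegral_eq (volume.restrict B) f
    rw [hgeq]
    have hP1 : (1:ℝ) < p / q := (one_lt_div hq0).2 hqp
    have hP : (p/q).HolderConjugate ((p/q) / ((p/q) - 1)) := Real.HolderConjugate.conjExponent hP1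
    have holder := ENNReal.lintegral_mul_le_Lp_mul_Lq (volume.restrict B) hP
      hgm.aemeasurable aemeasurable_const (g := fun _ => (1:ℝ≥0∞))
    simp only [Pi.mul_apply, mul_one, ENNReal.one_rpow, setLIntegral_one] at holder
    refine holder.trans ?_
    have key : (∫⁻ x in B, g x ^ (p/q)) ≤ kotheNorm n q φ w (chiB c r) := by
      have step1 : (∫⁻ x in B, g x ^ (p/q)) ≤ ∫⁻ x in B, f x ^ (p/q) :=
        lintegral_mono fun x => ENNReal.rpow_le_rpow (hgle x) (by positivity)
      refine step1.trans ?_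
      rw [← mul_chiB c r (fun x => f x ^ (p/q))]
      rw [kotheNorm]
      refine le_iSup_of_le (fun x => f x ^ (p/q)) (le_iSup_of_le ?_ le_rfl)
      -- morreyNorm q (f ^ (p/q)) ≤ 1
      rw [morreyNorm]
      refine iSup_le fun c' => iSup_le fun r' => iSup_le fun hr' => ?_
      have h2 : (∫⁻ x in ball c' r', (f x ^ (p/q)) ^ q * w x)
          = ∫⁻ x in ball c' r', f x ^ p * w x := by
        refine lintegral_congr fun x => ?_
        rw [← ENNReal.rpow_mul, div_mul_cancel₀ _ hq0.ne']
      rw [h2]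
      set A := (∫⁻ x in ball c' r', f x ^ p * w x) / φ c' r' with hA
      have hA1 : A ^ (1/p) ≤ 1 := by
        refine le_trans ?_ hf
        rw [morreyNorm]
        exact le_iSup_of_le c' (le_iSup_of_le r' (le_iSup_of_le hr' le_rfl))
      have h3 : A ^ (1/q) = (A ^ (1/p)) ^ (p/q) := by
        rw [← ENNReal.rpow_mul]
        congr 1
        field_simp
      rw [h3]
      calc (A ^ (1/p)) ^ (p/q) ≤ (1:ℝ≥0∞) ^ (p/q) :=
            ENNReal.rpow_le_rpow hA1 (by positivity)
        _ = 1 := ENNReal.one_rpow _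
    have he1 : 1 / (p/q) = t := by rw [one_div_div, ht]
    have he2 : 1 / ((p/q) / ((p/q) - 1)) = 1 - t := by
      rw [one_div_div, ht]
      field_simp
    rw [he1, he2]
    exact mul_le_mul_left (ENNReal.rpow_le_rpow key ht0.le) _
  -- Combine
  have expand : (morreyNorm n q φ w (chiB c r) * kotheNorm n q φ w (chiB c r) / volume B) ^ t
      = (morreyNorm n q φ w (chiB c r)) ^ t * (kotheNorm n q φ w (chiB c r)) ^ t
        / volume B ^ t := by
    rw [ENNReal.div_rpow_of_nonneg _ _ ht0.le, ENNReal.mul_rpow_of_nonneg _ _ ht0.le]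
  rw [expand]
  refine le_trans (ENNReal.div_le_div_right (mul_le_mul' morreyA kotheB) _) (le_of_eq ?_)
  have hVsplit : volume B = volume B ^ t * volume B ^ (1 - t) := by
    rw [← ENNReal.rpow_add t (1-t) hV0 hVtop]
    norm_num
  calc morreyNorm n q φ w (chiB c r) ^ t
        * (kotheNorm n q φ w (chiB c r) ^ t * volume B ^ (1 - t)) / volume B
      = morreyNorm n q φ w (chiB c r) ^ t * kotheNorm n q φ w (chiB c r) ^ t
          * volume B ^ (1 - t) / (volume B ^ t * volume B ^ (1 - t)) := by
        rw [← hVsplit, mul_assoc]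
    _ = morreyNorm n q φ w (chiB c r) ^ t * kotheNorm n q φ w (chiB c r) ^ t / volume B ^ t :=
        ENNReal.mul_div_mul_right _ _
          (ENNReal.rpow_pos (pos_iff_ne_zero.2 hV0) hVtop).ne'
          (ENNReal.rpow_ne_top_of_nonneg (by linarith) hVtop)
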